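/- Let G be a graph built from a neighborhood sequence (as in the CP construction). Then for every k with 2 ≤ k ≤ n, the set W_k ∪ {k} is a clique in G. -/

import Mathlib

/-- A neighborhood sequence for a non-leaping sequence `q`, on vertex set {1,…,n}. -/
structure NbhdSeq (n : ℕ) where
  q : ℕ → ℕ
  a : ℕ → ℕ
  W : ℕ → Finset ℕ
  hn : 2 ≤ n
  hq1 : q 1 = 0
  hq2 : q 2 = 1
  hq : ∀ k, 3 ≤ k → k ≤ n → 2 ≤ q k ∧ q k ≤ q (k - 1) + 1
  hW1 : W 1 = ∅
  hW2 : W 2 = {1}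
  ha2 : a 2 = 1
  hWk : ∀ k, 3 ≤ k → k ≤ n → W k = insert (a k) (Finset.Icc (k - q k + 1) (k - 1))
  hak : ∀ k, 3 ≤ k → k ≤ n → a k ∈ W (k - 1) ∧ a k < k - q k + 1

/-- The graph of a neighborhood sequence: vertex k is joined to every vertex of W k. -/
def NbhdSeq.graph {n : ℕ} (S : NbhdSeq n) : SimpleGraph ℕ where
  Adj i j := (i < j ∧ i ∈ S.W j) ∨ (j < i ∧ j ∈ S.W i)
  symm := ⟨fun i j h => Or.symm h⟩
  loopless := ⟨fun i h => by rcases h with ⟨h, -⟩ | ⟨h, -⟩ <;> exact lt_irrefl i h⟩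


lemma NbhdSeq.mem_W {n : ℕ} (S : NbhdSeq n) (k : ℕ) (h1 : 1 ≤ k) (hk : k ≤ n) :
    ∀ j ∈ S.W k, 1 ≤ j ∧ j < k := by
  induction k, h1 using Nat.le_induction with
  | base => simp [S.hW1]
  | succ k hk1 ih =>
    intro j hj
    by_cases h2 : k = 1
    · subst h2
      rw [show (1:ℕ) + 1 = 2 by rfl, S.hW2] at hj
      simp at hj
      omega
    · have h3 : 3 ≤ k + 1 := by omega
      rw [S.hWk _ h3 hk] at hj
      obtain ⟨haW, halt⟩ := S.hak _ h3 hk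
      simp only [Nat.add_sub_cancel] at haW halt hj
      simp only [Finset.mem_insert, Finset.mem_Icc] at hj
      rcases hj with rfl | ⟨h4, h5⟩
      · have := ih (by omega) _ haW
        omega
      · omega

lemma NbhdSeq.W_subset {n : ℕ} (S : NbhdSeq n) (k : ℕ) (h3 : 3 ≤ k) (hk : k ≤ n)
    (j : ℕ) (hj : j ∈ S.W k) (hne : j ≠ k - 1) : j ∈ S.W (k - 1) := by
  obtain ⟨haW, halt⟩ := S.hak k h3 hk
  rw [S.hWk k h3 hk] at hj
  simp only [Finset.mem_insert, Finset.mem_Icc] at hj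
  rcases hj with rfl | ⟨h4, h5⟩
  · exact haW
  · have hq := S.hq k h3 hk
    have ha1 : 1 ≤ S.a k := (S.mem_W (k - 1) (by omega) (by omega) _ haW).1
    by_cases hk3 : k = 3
    · subst hk3
      have hq3 : S.q 3 = 2 := by have := S.hq2; omega
      rw [hq3] at h4
      omega
    · have h3' : 3 ≤ k - 1 := by omega
      rw [S.hWk (k - 1) h3' (by omega)]
      obtain ⟨haW', halt'⟩ := S.hak (k - 1) h3' (by omega)
      have ha1' : 1 ≤ S.a (k - 1) :=
        (S.mem_W (k - 1 - 1) (by omega) (by omega) _ haW').1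
      simp only [Finset.mem_insert, Finset.mem_Icc]
      right
      omega

/-- in the graph of a neighborhood sequence, for every
2 ≤ k ≤ n the set W_k ∪ {k} is a clique. -/
theorem stmt17 {n : ℕ} (S : NbhdSeq n) (k : ℕ) (h2 : 2 ≤ k) (hk : k ≤ n) :
    S.graph.IsClique ((insert k (S.W k) : Finset ℕ) : Set ℕ) := by
  revert hk
  induction k, h2 using Nat.le_induction with
  | base =>
    intro hk u hu v hv hne
    rw [S.hW2] at hu hv
    simp only [Finset.coe_insert, Finset.coe_singleton, Set.mem_insert_iff,
      Set.mem_singleton_iff] at hu hv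
    rcases hu with rfl | rfl <;> rcases hv with rfl | rfl
    · exact absurd rfl hne
    · right; exact ⟨one_lt_two, by rw [S.hW2]; simp⟩
    · left; exact ⟨one_lt_two, by rw [S.hW2]; simp⟩
    · exact absurd rfl hne
  | succ k hk2 ih =>
    intro hk u hu v hv hne
    have hk' : k ≤ n := by omega
    have h3 : 3 ≤ k + 1 := by omega
    simp only [Finset.coe_insert, Set.mem_insert_iff, Finset.mem_coe] at hu hv
    have hbound := S.mem_W (k + 1) (by omega) hk
    rcases hu with rfl | hu
    · rcases hv with rfl | hv
      · exact absurd rfl hne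
      · right; exact ⟨(hbound v hv).2, hv⟩
    · rcases hv with rfl | hv
      · left; exact ⟨(hbound u hu).2, hu⟩
      · -- both in W (k+1)
        have hsub : ∀ j ∈ S.W (k + 1), j ≠ k → j ∈ S.W k := by
          intro j hj hjk
          have := S.W_subset (k + 1) h3 hk j hj (by omega)
          simpa using this
        by_cases huk : u = k
        · subst huk
          have hv' : v ∈ S.W u := hsub v hv (Ne.symm hne)
          have : v < u := (S.mem_W u (by omega) hk' v hv').2
          right; exact ⟨this, hv'⟩
        · by_cases hvk : v = k
          · subst hvk
            have hu' : u ∈ S.W v := hsub u hu huk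
            have : u < v := (S.mem_W v (by omega) hk' u hu').2
            left; exact ⟨this, hu'⟩
          · have hu' : u ∈ S.W k := hsub u hu huk
            have hv' : v ∈ S.W k := hsub v hv hvk
            exact ih hk' (by simp [hu']) (by simp [hv']) hne
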